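/- Consider vectors x(t) ∈ ℝⁿ evolving by x(t+1) = A(t)x(t), where each A(t) is doubly stochastic with positive diagonal, all positive entries at least η > 0, and the sequence of associated graphs satisfies the relaxed connectivity condition: for each block of B consecutive steps starting at tB, and for each 'cut' d with x_d(tB) ≠ x_{d+1}(tB) (components sorted in nonincreasing order), some edge crosses between {1,...,d} and {d+1,...,n} during the block. Let V(t) be the sample variance of x(t). Then whenever V(tB) > 0, (V(tB) − V((t+1)B))/V(tB) ≥ η/(2n²). -/
import Mathlib


noncomputable def sampleVar {n : ℕ} (x : Fin n → ℝ) : ℝ :=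
  ∑ i, (x i - (∑ j, x j) / n) ^ 2

lemma sampleVar_eq {n : ℕ} (hn : 0 < n) (z : Fin n → ℝ) :
    sampleVar z = ∑ i, (z i)^2 - (∑ i, z i)^2 / n := by
  have hn' : (n : ℝ) ≠ 0 := Nat.cast_ne_zero.2 hn.ne'
  unfold sampleVar
  have : ∀ i : Fin n, (z i - (∑ j, z j) / n) ^ 2
      = (z i)^2 - 2 * ((∑ j, z j)/n) * z i + ((∑ j, z j)/n)^2 := by
    intro i; ring
  rw [Finset.sum_congr rfl (fun i _ => this i)]
  rw [Finset.sum_add_distrib, Finset.sum_sub_distrib, ← Finset.mul_sum, Finset.sum_const,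
    Finset.card_univ, Fintype.card_fin, nsmul_eq_mul]
  field_simp
  ring

lemma var_step {n : ℕ} (hn : 0 < n) (A : Matrix (Fin n) (Fin n) ℝ)
    (hrow : ∀ i, ∑ j, A i j = 1) (hcol : ∀ j, ∑ i, A i j = 1) (z : Fin n → ℝ) :
    sampleVar z - sampleVar (A.mulVec z)
      = (1/2) * ∑ j, ∑ k, (∑ m, A m j * A m k) * (z j - z k)^2 := by
  have hsum : ∑ i, (A.mulVec z) i = ∑ i, z i := by
    simp only [Matrix.mulVec, dotProduct]
    rw [Finset.sum_comm]
    refine Finset.sum_congr rfl (fun j _ => ?_)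
    rw [← Finset.sum_mul, hcol j, one_mul]
  have hm : ∀ m : Fin n, ∑ j, ∑ k, A m j * A m k * (z j - z k)^2
      = 2 * (∑ j, A m j * z j^2)
        - 2 * ((∑ j, A m j * z j) * (∑ k, A m k * z k)) := by
    intro m
    have e1 : ∑ j, ∑ k, A m j * A m k * (z j - z k)^2
        = ∑ j, ∑ k, ((A m j * z j^2) * A m k + A m j * (A m k * z k^2)
            - 2 * ((A m j * z j) * (A m k * z k))) := by
      refine Finset.sum_congr rfl (fun j _ => Finset.sum_congr rfl (fun k _ => by ring))
    have t1 : ∑ j, ∑ k, (A m j * z j^2) * A m k = ∑ j, A m j * z j^2 := by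
      refine Finset.sum_congr rfl (fun j _ => ?_)
      rw [← Finset.mul_sum, hrow m, mul_one]
    have t2 : ∑ j : Fin n, ∑ k, A m j * (A m k * z k^2) = ∑ k, A m k * z k^2 := by
      rw [Finset.sum_comm]
      refine Finset.sum_congr rfl (fun k _ => ?_)
      rw [← Finset.sum_mul, hrow m, one_mul]
    have t3 : ∑ j, ∑ k, 2 * ((A m j * z j) * (A m k * z k))
        = 2 * ((∑ j, A m j * z j) * (∑ k, A m k * z k)) := by
      rw [Finset.sum_mul_sum, Finset.mul_sum]
      refine Finset.sum_congr rfl (fun j _ => ?_)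
      rw [Finset.mul_sum]
    have e2 : ∀ j : Fin n, ∑ k, ((A m j * z j^2) * A m k + A m j * (A m k * z k^2)
            - 2 * ((A m j * z j) * (A m k * z k)))
        = (∑ k, (A m j * z j^2) * A m k) + (∑ k, A m j * (A m k * z k^2))
            - ∑ k, 2 * ((A m j * z j) * (A m k * z k)) := by
      intro j
      rw [Finset.sum_sub_distrib, Finset.sum_add_distrib]
    rw [e1, Finset.sum_congr rfl (fun j _ => e2 j), Finset.sum_sub_distrib,
      Finset.sum_add_distrib, t1, t2, t3]
    have hAz : ∑ k, A m k * z k ^ 2 = ∑ j, A m j * z j ^ 2 := rfl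
    rw [hAz]; ring
  have key : ∑ j, ∑ k, (∑ m, A m j * A m k) * (z j - z k)^2
      = 2 * (∑ i, (z i)^2) - 2 * ∑ m, ((A.mulVec z) m)^2 := by
    have e0 : ∑ j, ∑ k, (∑ m, A m j * A m k) * (z j - z k)^2
        = ∑ m, ∑ j, ∑ k, A m j * A m k * (z j - z k)^2 := by
      have : ∑ j, ∑ k, (∑ m, A m j * A m k) * (z j - z k)^2
          = ∑ j, ∑ m, ∑ k, A m j * A m k * (z j - z k)^2 := by
        refine Finset.sum_congr rfl (fun j _ => ?_)
        rw [Finset.sum_congr rfl (fun k (_ : k ∈ Finset.univ) => Finset.sum_mul ..), Finset.sum_comm]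
      rw [this, Finset.sum_comm]
    have c2 : ∀ m : Fin n, (∑ j, A m j * z j) * (∑ k, A m k * z k) = ((A.mulVec z) m)^2 := by
      intro m; simp [Matrix.mulVec, dotProduct, sq]
    have hm' : ∀ m : Fin n, ∑ j, ∑ k, A m j * A m k * (z j - z k)^2
        = 2 * (∑ j, A m j * z j^2) - 2 * ((A.mulVec z) m)^2 := by
      intro m; rw [hm m, c2 m]
    rw [e0, Finset.sum_congr rfl (fun m _ => hm' m), Finset.sum_sub_distrib,
      ← Finset.mul_sum, ← Finset.mul_sum]
    have c1 : ∑ m : Fin n, ∑ j, A m j * z j ^ 2 = ∑ j, (z j)^2 := by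
      rw [Finset.sum_comm]
      refine Finset.sum_congr rfl (fun j _ => ?_)
      rw [← Finset.sum_mul, hcol j, one_mul]
    rw [c1]
  rw [sampleVar_eq hn, sampleVar_eq hn, hsum, key]
  ring


lemma ico_telescope (f : ℕ → ℝ) : ∀ a b : ℕ, a ≤ b →
    ∑ s ∈ Finset.Ico a b, (f s - f (s+1)) = f a - f b := by
  intro a b hab
  induction b, hab using Nat.le_induction with
  | base => simp
  | succ b hab ih => rw [Finset.sum_Ico_succ_top hab, ih]; ring


lemma cross_weight {n : ℕ} (d : ℕ) (a : Fin n → ℝ) (hnn : ∀ j, 0 ≤ a j)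
    (hsum : ∑ j, a j = 1) (η : ℝ) (i0 j0 : Fin n)
    (hi0 : (i0 : ℕ) ≤ d) (hj0 : d < (j0 : ℕ)) (ha : η ≤ a i0) (hb : η ≤ a j0) :
    η ≤ ∑ j : Fin n, ∑ k : Fin n, if ((j:ℕ) ≤ d ∧ d < (k:ℕ)) ∨ ((k:ℕ) ≤ d ∧ d < (j:ℕ))
      then a j * a k else 0 := by
  classical
  set r := ∑ j : Fin n, if (j:ℕ) ≤ d then a j else 0 with hr
  set q := ∑ j : Fin n, if d < (j:ℕ) then a j else 0 with hq
  have hsplit : ∀ j k : Fin n,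
      (if ((j:ℕ) ≤ d ∧ d < (k:ℕ)) ∨ ((k:ℕ) ≤ d ∧ d < (j:ℕ)) then a j * a k else 0)
      = (if (j:ℕ) ≤ d ∧ d < (k:ℕ) then a j * a k else 0)
        + (if (k:ℕ) ≤ d ∧ d < (j:ℕ) then a j * a k else 0) := by
    intro j k
    by_cases h1 : (j:ℕ) ≤ d ∧ d < (k:ℕ) <;> by_cases h2 : (k:ℕ) ≤ d ∧ d < (j:ℕ) <;>
      first | omega | simp [h1, h2]
  have inner1 : ∀ j : Fin n, ∑ k : Fin n, (if (j:ℕ) ≤ d ∧ d < (k:ℕ) then a j * a k else 0)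
      = (if (j:ℕ) ≤ d then a j else 0) * q := by
    intro j
    by_cases hj : (j:ℕ) ≤ d
    · simp only [hj, true_and, if_true, hq, Finset.mul_sum]
      exact Finset.sum_congr rfl (fun k _ => by by_cases hk : d < (k:ℕ) <;> simp [hk])
    · simp [hj]
  have inner2 : ∀ j : Fin n, ∑ k : Fin n, (if (k:ℕ) ≤ d ∧ d < (j:ℕ) then a j * a k else 0)
      = (if d < (j:ℕ) then a j else 0) * r := by
    intro j
    by_cases hj : d < (j:ℕ)
    · simp only [hj, and_true, if_true, hr, Finset.mul_sum]
      exact Finset.sum_congr rfl (fun k _ => by by_cases hk : (k:ℕ) ≤ d <;> simp [hk])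
    · simp [hj]
  have e : ∀ j : Fin n, (∑ k : Fin n, if ((j:ℕ) ≤ d ∧ d < (k:ℕ)) ∨ ((k:ℕ) ≤ d ∧ d < (j:ℕ))
      then a j * a k else 0)
      = (if (j:ℕ) ≤ d then a j else 0) * q + (if d < (j:ℕ) then a j else 0) * r := by
    intro j
    rw [Finset.sum_congr rfl (fun k _ => hsplit j k), Finset.sum_add_distrib,
      inner1 j, inner2 j]
  have htot : (∑ j : Fin n, ∑ k : Fin n, if ((j:ℕ) ≤ d ∧ d < (k:ℕ)) ∨ ((k:ℕ) ≤ d ∧ d < (j:ℕ))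
      then a j * a k else 0) = r * q + q * r := by
    rw [Finset.sum_congr rfl (fun j _ => e j), Finset.sum_add_distrib,
      ← Finset.sum_mul, ← Finset.sum_mul, ← hr, ← hq]
  rw [htot]
  have hrq : r + q = 1 := by
    rw [hr, hq, ← Finset.sum_add_distrib, ← hsum]
    exact Finset.sum_congr rfl (fun j _ => by by_cases h : (j:ℕ) ≤ d <;> simp [h] <;> omega)
  have hr0 : 0 ≤ r := Finset.sum_nonneg (fun j _ => by by_cases h : (j:ℕ) ≤ d <;> simp [h, hnn])
  have hq0 : 0 ≤ q := Finset.sum_nonneg (fun j _ => by by_cases h : d < (j:ℕ) <;> simp [h, hnn])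
  have hηr : η ≤ r := le_trans ha (by
    have := Finset.single_le_sum (f := fun j : Fin n => if (j:ℕ) ≤ d then a j else 0)
      (fun j _ => by by_cases h : (j:ℕ) ≤ d <;> simp [h, hnn]) (Finset.mem_univ i0)
    simpa [hi0] using this)
  have hηq : η ≤ q := le_trans hb (by
    have := Finset.single_le_sum (f := fun j : Fin n => if d < (j:ℕ) then a j else 0)
      (fun j _ => by by_cases h : d < (j:ℕ) <;> simp [h, hnn]) (Finset.mem_univ j0)
    simpa [hj0] using this)
  nlinarith [mul_nonneg hr0 (sub_nonneg.2 hηq), mul_nonneg hq0 (sub_nonneg.2 hηr)]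

lemma keep_bounds {n : ℕ} (M : ℕ → Matrix (Fin n) (Fin n) ℝ)
    (hnn : ∀ s i j, 0 ≤ M s i j) (hrow : ∀ s i, ∑ j, M s i j = 1)
    (y : ℕ → Fin n → ℝ) (hdyn : ∀ s i, y (s+1) i = ∑ j, M s i j * y s j)
    (t0 : ℕ) (d : ℕ) (a b : ℝ)
    (hbase1 : ∀ i : Fin n, (i:ℕ) ≤ d → a ≤ y t0 i)
    (hbase2 : ∀ j : Fin n, d < (j:ℕ) → y t0 j ≤ b) :
    ∀ s, t0 ≤ s →
      (∀ u, t0 ≤ u → u < s → ∀ i j : Fin n, (i:ℕ) ≤ d → d < (j:ℕ) →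
        M u i j = 0 ∧ M u j i = 0) →
      (∀ i : Fin n, (i:ℕ) ≤ d → a ≤ y s i) ∧ (∀ j : Fin n, d < (j:ℕ) → y s j ≤ b) := by
  intro s hs
  induction s, hs using Nat.le_induction with
  | base => exact fun _ => ⟨hbase1, hbase2⟩
  | succ s hs ih =>
    intro hnc
    have ihr := ih (fun u hu hus => hnc u hu (by omega))
    have hz := hnc s hs (by omega)
    constructor
    · intro i hi
      rw [hdyn s i]
      calc a = ∑ j, M s i j * a := by rw [← Finset.sum_mul, hrow s i, one_mul]
        _ ≤ ∑ j, M s i j * y s j := by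
          refine Finset.sum_le_sum (fun j _ => ?_)
          by_cases hj : (j:ℕ) ≤ d
          · exact mul_le_mul_of_nonneg_left (ihr.1 j hj) (hnn s i j)
          · rw [(hz i j hi (by omega)).1]; simp
    · intro j hj
      rw [hdyn s j]
      calc ∑ k, M s j k * y s k ≤ ∑ k, M s j k * b := by
            refine Finset.sum_le_sum (fun k _ => ?_)
            by_cases hk : d < (k:ℕ)
            · exact mul_le_mul_of_nonneg_left (ihr.2 k hk) (hnn s j k)
            · rw [(hz k j (by omega) hj).2]; simp
        _ = b := by rw [← Finset.sum_mul, hrow s j, one_mul]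

lemma block_decrease {n : ℕ} (hn : 0 < n) (η : ℝ) (hη : 0 < η)
    (M : ℕ → Matrix (Fin n) (Fin n) ℝ) (t0 t1 : ℕ) (ht : t0 ≤ t1)
    (hnn : ∀ s i j, 0 ≤ M s i j)
    (hrow : ∀ s i, ∑ j, M s i j = 1) (hcol : ∀ s j, ∑ i, M s i j = 1)
    (hdiag : ∀ s i, 0 < M s i i) (hmin : ∀ s i j, 0 < M s i j → η ≤ M s i j)
    (hsym : ∀ s i j, 0 < M s i j ↔ 0 < M s j i)
    (y : ℕ → Fin n → ℝ) (hdyn : ∀ s i, y (s+1) i = ∑ j, M s i j * y s j)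
    (hsorted : ∀ i j : Fin n, i ≤ j → y t0 j ≤ y t0 i)
    (hconn : ∀ d : ℕ, ∀ hd : d + 1 < n,
      y t0 ⟨d+1, hd⟩ ≠ y t0 ⟨d, Nat.lt_of_succ_lt hd⟩ →
      ∃ s, t0 ≤ s ∧ s < t1 ∧ ∃ i j : Fin n, (i:ℕ) ≤ d ∧ d < (j:ℕ) ∧ 0 < M s i j) :
    η * sampleVar (y t0) ≤ 2 * (n:ℝ)^2 * (sampleVar (y t0) - sampleVar (y t1)) := by
  classical
  -- sorted values and gaps
  set Y : ℕ → ℝ := fun d => y t0 ⟨min d (n-1), by omega⟩ with hY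
  set D : ℕ → ℝ := fun d => Y d - Y (d+1) with hD
  have hYmono : ∀ a b : ℕ, a ≤ b → Y b ≤ Y a := by
    intro a b hab
    exact hsorted _ _ (by simp [Fin.le_def]; omega)
  have hDnn : ∀ d, 0 ≤ D d := fun d => sub_nonneg.2 (hYmono d (d+1) (by omega))
  have hYd : ∀ d (hd : d < n), Y d = y t0 ⟨d, hd⟩ := by
    intro d hd
    simp only [hY]
    congr 1
    exact Fin.ext (by simp; omega)
  have hYtel : ∀ a b : ℕ, a ≤ b → ∑ e ∈ Finset.Ico a b, D e = Y a - Y b :=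
    fun a b hab => ico_telescope Y a b hab
  -- first crossing times
  have hex : ∀ d : ℕ, ∃ s : ℕ, (D d ≠ 0 ∧ d + 1 < n) →
      ((t0 ≤ s ∧ s < t1 ∧ ∃ i j : Fin n, (i:ℕ) ≤ d ∧ d < (j:ℕ) ∧ 0 < M s i j) ∧
        ∀ u, t0 ≤ u → u < s → ¬ ∃ i j : Fin n, (i:ℕ) ≤ d ∧ d < (j:ℕ) ∧ 0 < M u i j) := by
    intro d
    by_cases h : D d ≠ 0 ∧ d + 1 < n
    · obtain ⟨hD0, hd⟩ := h
      have hne : y t0 ⟨d+1, hd⟩ ≠ y t0 ⟨d, Nat.lt_of_succ_lt hd⟩ := by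
        intro he
        apply hD0
        rw [hD]
        simp only
        rw [hYd d (by omega), hYd (d+1) (by omega), he, sub_self]
      have hQ : ∃ s, t0 ≤ s ∧ s < t1 ∧ ∃ i j : Fin n, (i:ℕ) ≤ d ∧ d < (j:ℕ) ∧ 0 < M s i j :=
        hconn d hd hne
      refine ⟨Nat.find hQ, fun _ => ⟨Nat.find_spec hQ, ?_⟩⟩
      intro u hu hus hcr
      exact Nat.find_min hQ hus ⟨hu, by
        have := (Nat.find_spec hQ).2.1; omega, hcr⟩
    · exact ⟨0, fun hc => absurd hc h⟩
  choose sT hsT using hex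
  -- invariance up to the first crossing time
  have hkeep : ∀ d : ℕ, d + 1 < n → D d ≠ 0 → ∀ s, t0 ≤ s → s ≤ sT d →
      (∀ i : Fin n, (i:ℕ) ≤ d → Y d ≤ y s i) ∧
        (∀ j : Fin n, d < (j:ℕ) → y s j ≤ Y (d+1)) := by
    intro d hd hD0 s hs0 hssT
    refine keep_bounds M hnn hrow y hdyn t0 d (Y d) (Y (d+1)) ?_ ?_ s hs0 ?_
    · intro i hi
      rw [hYd d (by omega)]
      exact hsorted i ⟨d, by omega⟩ (by simp [Fin.le_def]; omega)
    · intro j hj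
      rw [hYd (d+1) (by omega)]
      exact hsorted ⟨d+1, by omega⟩ j (by simp [Fin.le_def]; omega)
    · intro u hu hus i j hi hj
      have hnc := (hsT d ⟨hD0, hd⟩).2 u hu (by omega)
      constructor
      · by_contra hpos
        exact hnc ⟨i, j, hi, hj, lt_of_le_of_ne (hnn u i j) (Ne.symm hpos)⟩
      · by_contra hpos
        have : 0 < M u j i := lt_of_le_of_ne (hnn u j i) (Ne.symm hpos)
        exact hnc ⟨i, j, hi, hj, (hsym u j i).1 this⟩
  have hn0 : (0:ℝ) < (n:ℝ) := by exact_mod_cast hn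
  -- per-step decrease bound
  have stepA : ∀ s, t0 ≤ s → s < t1 →
      (η/2) * (∑ d ∈ Finset.range (n-1), if D d ≠ 0 ∧ sT d = s then (D d)^2 else 0)
        ≤ sampleVar (y s) - sampleVar (y (s+1)) := by
    intro s hs0 hs1
    have hmv : y (s+1) = (M s).mulVec (y s) := by
      funext i
      rw [hdyn s i]
      simp [Matrix.mulVec, dotProduct]
    rw [hmv, var_step hn (M s) (hrow s) (hcol s) (y s)]
    set C : Fin n → Fin n → ℝ := fun j k => ∑ m, M s m j * M s m k with hC
    have hCnn : ∀ j k, 0 ≤ C j k :=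
      fun j k => Finset.sum_nonneg (fun m _ => mul_nonneg (hnn s m j) (hnn s m k))
    set G : Fin n → Fin n → ℝ := fun j k => ∑ d ∈ Finset.range (n-1),
      if (D d ≠ 0 ∧ sT d = s) ∧ (((j:ℕ) ≤ d ∧ d < (k:ℕ)) ∨ ((k:ℕ) ≤ d ∧ d < (j:ℕ)))
      then (D d)^2 else 0 with hG
    -- G is below the squared gap
    have hGle : ∀ j k : Fin n, G j k ≤ (y s j - y s k)^2 := by
      have aux : ∀ j k : Fin n, (j:ℕ) < (k:ℕ) → G j k ≤ (y s j - y s k)^2 := by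
        intro j k hjk
        set S : Finset ℕ := (Finset.range (n-1)).filter (fun d =>
          (D d ≠ 0 ∧ sT d = s) ∧ (((j:ℕ) ≤ d ∧ d < (k:ℕ)) ∨ ((k:ℕ) ≤ d ∧ d < (j:ℕ))))
          with hS
        have hGS : G j k = ∑ d ∈ S, (D d)^2 := (Finset.sum_filter _ _).symm
        rcases S.eq_empty_or_nonempty with hSe | hSne
        · rw [hGS, hSe, Finset.sum_empty]; exact sq_nonneg _
        · set dm := S.min' hSne with hdm
          set dM := S.max' hSne with hdM
          have hdmS := S.min'_mem hSne
          have hdMS := S.max'_mem hSne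
          have hmem : ∀ e ∈ S, e + 1 < n ∧ D e ≠ 0 ∧ sT e = s ∧ (j:ℕ) ≤ e ∧ e < (k:ℕ) := by
            intro e he
            rw [hS, Finset.mem_filter, Finset.mem_range] at he
            obtain ⟨he1, ⟨he2, he3⟩, he4⟩ := he
            refine ⟨by omega, he2, he3, ?_, ?_⟩ <;> omega
          obtain ⟨hdm1, hdm2, hdm3, hdm4, hdm5⟩ := hmem dm hdmS
          obtain ⟨hdM1, hdM2, hdM3, hdM4, hdM5⟩ := hmem dM hdMS
          have b1 : Y dm ≤ y s j :=
            (hkeep dm hdm1 hdm2 s hs0 (le_of_eq hdm3.symm)).1 j hdm4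
          have b2 : y s k ≤ Y (dM + 1) :=
            (hkeep dM hdM1 hdM2 s hs0 (le_of_eq hdM3.symm)).2 k hdM5
          have hdmdM : dm ≤ dM := S.min'_le dM hdMS
          have hsub : S ⊆ Finset.Ico dm (dM + 1) := by
            intro e he
            rw [Finset.mem_Ico]
            exact ⟨S.min'_le e he, by have := S.le_max' e he; omega⟩
          have hsum_le : ∑ e ∈ S, D e ≤ Y dm - Y (dM+1) := by
            rw [← hYtel dm (dM+1) (by omega)]
            exact Finset.sum_le_sum_of_subset_of_nonneg hsub (fun e _ _ => hDnn e)
          have hgap : ∑ e ∈ S, D e ≤ y s j - y s k := by linarith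
          have hnnS : 0 ≤ ∑ e ∈ S, D e := Finset.sum_nonneg (fun e _ => hDnn e)
          calc G j k = ∑ d ∈ S, (D d)^2 := hGS
            _ ≤ (∑ d ∈ S, D d)^2 := Finset.sum_sq_le_sq_sum_of_nonneg (fun e _ => hDnn e)
            _ ≤ (y s j - y s k)^2 := by
                exact pow_le_pow_left₀ hnnS hgap 2
      intro j k
      rcases Nat.lt_trichotomy (j:ℕ) (k:ℕ) with h | h | h
      · exact aux j k h
      · have hjk : j = k := Fin.ext h
        subst hjk
        have : G j j = 0 := Finset.sum_eq_zero (fun d _ => by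
          rw [if_neg]; rintro ⟨-, h1 | h1⟩ <;> omega)
        rw [this]; exact sq_nonneg _
      · have hsymG : G j k = G k j := by
          rw [hG]
          exact Finset.sum_congr rfl (fun d _ => if_congr (by tauto) rfl rfl)
        have : (y s j - y s k)^2 = (y s k - y s j)^2 := by ring
        rw [hsymG, this]
        exact aux k j h
    -- the weight of each crossed cut is at least η
    have hW : ∀ d, d + 1 < n → D d ≠ 0 → sT d = s →
        η ≤ ∑ j : Fin n, ∑ k : Fin n,
          if ((j:ℕ) ≤ d ∧ d < (k:ℕ)) ∨ ((k:ℕ) ≤ d ∧ d < (j:ℕ)) then C j k else 0 := by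
      intro d hd hD0 hsTd
      obtain ⟨i0, j0, hi0, hj0, hpos⟩ := (hsT d ⟨hD0, hd⟩).1.2.2
      rw [hsTd] at hpos
      have h1 : η ≤ ∑ j : Fin n, ∑ k : Fin n,
          if ((j:ℕ) ≤ d ∧ d < (k:ℕ)) ∨ ((k:ℕ) ≤ d ∧ d < (j:ℕ))
          then M s i0 j * M s i0 k else 0 :=
        cross_weight d (M s i0) (hnn s i0) (hrow s i0) η i0 j0 hi0 hj0
          (hmin s i0 i0 (hdiag s i0)) (hmin s i0 j0 hpos)
      refine le_trans h1 (Finset.sum_le_sum (fun j _ => Finset.sum_le_sum (fun k _ => ?_)))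
      by_cases hc : ((j:ℕ) ≤ d ∧ d < (k:ℕ)) ∨ ((k:ℕ) ≤ d ∧ d < (j:ℕ))
      · rw [if_pos hc, if_pos hc]
        exact Finset.single_le_sum
          (f := fun m => M s m j * M s m k)
          (fun m _ => mul_nonneg (hnn s m j) (hnn s m k)) (Finset.mem_univ i0)
      · rw [if_neg hc, if_neg hc]
    -- swap sums : ∑∑ C·G equals the per-cut decomposition
    have hswap : ∑ j : Fin n, ∑ k : Fin n, C j k * G j k
        = ∑ d ∈ Finset.range (n-1), (if D d ≠ 0 ∧ sT d = s then
            (∑ j : Fin n, ∑ k : Fin n,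
              if ((j:ℕ) ≤ d ∧ d < (k:ℕ)) ∨ ((k:ℕ) ≤ d ∧ d < (j:ℕ)) then C j k else 0)
            * (D d)^2 else 0) := by
      have e1 : ∀ j k : Fin n, C j k * G j k = ∑ d ∈ Finset.range (n-1),
          (if (D d ≠ 0 ∧ sT d = s) ∧ (((j:ℕ) ≤ d ∧ d < (k:ℕ)) ∨ ((k:ℕ) ≤ d ∧ d < (j:ℕ)))
            then C j k * (D d)^2 else 0) := by
        intro j k
        rw [hG]
        simp only
        rw [Finset.mul_sum]
        exact Finset.sum_congr rfl (fun d _ => by rw [mul_ite, mul_zero])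
      rw [Finset.sum_congr rfl (fun j (_ : j ∈ (Finset.univ : Finset (Fin n))) =>
        Finset.sum_congr rfl (fun k (_ : k ∈ (Finset.univ : Finset (Fin n))) => e1 j k))]
      rw [Finset.sum_congr rfl (fun j (_ : j ∈ (Finset.univ : Finset (Fin n))) =>
        Finset.sum_comm)]
      rw [Finset.sum_comm]
      refine Finset.sum_congr rfl (fun d _ => ?_)
      by_cases hc : D d ≠ 0 ∧ sT d = s
      · rw [if_pos hc, Finset.sum_mul]
        refine Finset.sum_congr rfl (fun j _ => ?_)
        rw [Finset.sum_mul]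
        refine Finset.sum_congr rfl (fun k _ => ?_)
        by_cases hcr : ((j:ℕ) ≤ d ∧ d < (k:ℕ)) ∨ ((k:ℕ) ≤ d ∧ d < (j:ℕ)) <;>
          simp [hcr, hc]
      · rw [if_neg hc]
        refine Finset.sum_eq_zero (fun j _ => Finset.sum_eq_zero (fun k _ => ?_))
        rw [if_neg (by tauto)]
    have hmain : η * (∑ d ∈ Finset.range (n-1), if D d ≠ 0 ∧ sT d = s then (D d)^2 else 0)
        ≤ ∑ j : Fin n, ∑ k : Fin n, C j k * G j k := by
      rw [hswap, Finset.mul_sum]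
      refine Finset.sum_le_sum (fun d hd => ?_)
      rw [Finset.mem_range] at hd
      by_cases hc : D d ≠ 0 ∧ sT d = s
      · rw [if_pos hc, if_pos hc]
        exact mul_le_mul_of_nonneg_right (hW d (by omega) hc.1 hc.2) (sq_nonneg _)
      · rw [if_neg hc, if_neg hc, mul_zero]
    have hfinal : ∑ j : Fin n, ∑ k : Fin n, C j k * G j k
        ≤ ∑ j : Fin n, ∑ k : Fin n, C j k * (y s j - y s k)^2 := by
      refine Finset.sum_le_sum (fun j _ => Finset.sum_le_sum (fun k _ => ?_))
      exact mul_le_mul_of_nonneg_left (hGle j k) (hCnn j k)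
    calc (η/2) * (∑ d ∈ Finset.range (n-1), if D d ≠ 0 ∧ sT d = s then (D d)^2 else 0)
        = (1/2) * (η * ∑ d ∈ Finset.range (n-1), if D d ≠ 0 ∧ sT d = s then (D d)^2 else 0)
          := by ring
      _ ≤ (1/2) * (∑ j : Fin n, ∑ k : Fin n, C j k * G j k) := by
          exact mul_le_mul_of_nonneg_left hmain (by norm_num)
      _ ≤ (1/2) * (∑ j : Fin n, ∑ k : Fin n, C j k * (y s j - y s k)^2) := by
          exact mul_le_mul_of_nonneg_left hfinal (by norm_num)
      _ = (1/2) * ∑ j : Fin n, ∑ k : Fin n, (∑ m, M s m j * M s m k) * (y s j - y s k)^2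
          := rfl
  -- sum the per-step bounds over the block
  set K : ℝ := ∑ d ∈ Finset.range (n-1), if D d ≠ 0 then (D d)^2 else 0 with hK
  have hK0 : 0 ≤ K := Finset.sum_nonneg (fun d _ => by
    by_cases h : D d ≠ 0 <;> simp [h, sq_nonneg])
  have hsum1 : (η/2) * K ≤ sampleVar (y t0) - sampleVar (y t1) := by
    have tele : ∑ s ∈ Finset.Ico t0 t1, (sampleVar (y s) - sampleVar (y (s+1)))
        = sampleVar (y t0) - sampleVar (y t1) :=
      ico_telescope (fun s => sampleVar (y s)) t0 t1 ht
    have hle : ∑ s ∈ Finset.Ico t0 t1,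
        (η/2) * (∑ d ∈ Finset.range (n-1), if D d ≠ 0 ∧ sT d = s then (D d)^2 else 0)
        ≤ ∑ s ∈ Finset.Ico t0 t1, (sampleVar (y s) - sampleVar (y (s+1))) := by
      refine Finset.sum_le_sum (fun s hs => ?_)
      rw [Finset.mem_Ico] at hs
      exact stepA s hs.1 hs.2
    have heq : ∑ s ∈ Finset.Ico t0 t1,
        (η/2) * (∑ d ∈ Finset.range (n-1), if D d ≠ 0 ∧ sT d = s then (D d)^2 else 0)
        = (η/2) * K := by
      rw [← Finset.mul_sum]
      congr 1
      rw [Finset.sum_comm, hK]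
      refine Finset.sum_congr rfl (fun d hd => ?_)
      rw [Finset.mem_range] at hd
      by_cases hD0 : D d ≠ 0
      · have hmem : sT d ∈ Finset.Ico t0 t1 := by
          rw [Finset.mem_Ico]
          exact ⟨(hsT d ⟨hD0, by omega⟩).1.1, (hsT d ⟨hD0, by omega⟩).1.2.1⟩
        rw [if_pos hD0]
        rw [Finset.sum_congr rfl (fun u (_ : u ∈ Finset.Ico t0 t1) =>
          (by simp [hD0] : (if D d ≠ 0 ∧ sT d = u then (D d)^2 else 0)
            = if sT d = u then (D d)^2 else 0))]
        rw [Finset.sum_ite_eq (Finset.Ico t0 t1) (sT d) (fun _ => (D d)^2), if_pos hmem]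
      · rw [if_neg hD0]
        exact Finset.sum_eq_zero (fun u _ => by rw [if_neg (by tauto)])
    rw [← tele, ← heq]
    exact hle
  -- bound the initial variance by the gaps
  have hVK : sampleVar (y t0) ≤ (n:ℝ)^2 * K := by
    set m : ℝ := (∑ i, y t0 i) / n with hm
    have hmaxB : ∀ i : Fin n, y t0 i ≤ Y 0 := by
      intro i
      rw [hYd 0 hn]
      exact hsorted ⟨0, hn⟩ i (by simp [Fin.le_def])
    have hminB : ∀ i : Fin n, Y (n-1) ≤ y t0 i := by
      intro i
      rw [hYd (n-1) (by omega)]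
      exact hsorted i ⟨n-1, by omega⟩ (by simp [Fin.le_def]; omega)
    have hm1 : m ≤ Y 0 := by
      rw [hm, div_le_iff₀ hn0]
      calc ∑ i, y t0 i ≤ ∑ _i : Fin n, Y 0 := Finset.sum_le_sum (fun i _ => hmaxB i)
        _ = Y 0 * n := by simp [Finset.sum_const, Finset.card_univ, mul_comm]
    have hm2 : Y (n-1) ≤ m := by
      rw [hm, le_div_iff₀ hn0]
      calc Y (n-1) * n = ∑ _i : Fin n, Y (n-1) := by
            simp [Finset.sum_const, Finset.card_univ, mul_comm]
        _ ≤ ∑ i, y t0 i := Finset.sum_le_sum (fun i _ => hminB i)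
    have hR : Y 0 - Y (n-1) = ∑ d ∈ Finset.range (n-1), D d := by
      rw [← hYtel 0 (n-1) (by omega), Finset.range_eq_Ico]
    have hsq : ∀ i : Fin n, (y t0 i - m)^2 ≤ (Y 0 - Y (n-1))^2 := by
      intro i
      apply sq_le_sq'
      · have := hminB i; linarith
      · have := hmaxB i; linarith
    have hV1 : sampleVar (y t0) ≤ (n:ℝ) * (Y 0 - Y (n-1))^2 := by
      unfold sampleVar
      calc ∑ i, (y t0 i - (∑ j, y t0 j) / n)^2 = ∑ i, (y t0 i - m)^2 := by rw [hm]
        _ ≤ ∑ _i : Fin n, (Y 0 - Y (n-1))^2 := Finset.sum_le_sum (fun i _ => hsq i)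
        _ = (n:ℝ) * (Y 0 - Y (n-1))^2 := by
            simp [Finset.sum_const, Finset.card_univ, mul_comm]
    have hRg : ∑ d ∈ Finset.range (n-1), D d
        = ∑ d ∈ Finset.range (n-1), (if D d ≠ 0 then D d else 0) := by
      refine Finset.sum_congr rfl (fun d _ => ?_)
      by_cases h : D d ≠ 0
      · rw [if_pos h]
      · rw [if_neg h]; push_neg at h; exact h
    have hCS : (Y 0 - Y (n-1))^2 ≤ K * ((n:ℝ) - 1) := by
      rw [hR, hRg]
      have := Finset.sum_mul_sq_le_sq_mul_sq (Finset.range (n-1))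
        (fun d => if D d ≠ 0 then D d else 0) (fun _ => (1:ℝ))
      simp only [mul_one, one_pow] at this
      have hgsq : ∑ d ∈ Finset.range (n-1), (if D d ≠ 0 then D d else 0)^2 = K := by
        rw [hK]
        refine Finset.sum_congr rfl (fun d _ => ?_)
        by_cases h : D d ≠ 0 <;> simp [h]
      have hcard : ∑ _d ∈ Finset.range (n-1), (1:ℝ) = ((n:ℕ) - 1 : ℕ) := by
        simp
      rw [hgsq, hcard] at this
      refine le_trans this ?_
      have : (((n:ℕ) - 1 : ℕ) : ℝ) ≤ (n:ℝ) - 1 := by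
        have : (1:ℝ) ≤ (n:ℝ) := by exact_mod_cast hn
        rw [Nat.cast_sub hn]
        simp
      nlinarith [hK0]
    calc sampleVar (y t0) ≤ (n:ℝ) * (Y 0 - Y (n-1))^2 := hV1
      _ ≤ (n:ℝ) * (K * ((n:ℝ) - 1)) := mul_le_mul_of_nonneg_left hCS (le_of_lt hn0)
      _ ≤ (n:ℝ)^2 * K := by nlinarith [hK0, hn0]
  -- conclude
  calc η * sampleVar (y t0) ≤ η * ((n:ℝ)^2 * K) :=
        mul_le_mul_of_nonneg_left hVK (le_of_lt hη)
    _ = 2 * (n:ℝ)^2 * ((η/2) * K) := by ring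
    _ ≤ 2 * (n:ℝ)^2 * (sampleVar (y t0) - sampleVar (y t1)) := by
        refine mul_le_mul_of_nonneg_left hsum1 (by positivity)


theorem stmt15 (n B : ℕ) (hn : 0 < n) (hB : 0 < B)
    (A : ℕ → Matrix (Fin n) (Fin n) ℝ) (η : ℝ) (hη : 0 < η)
    -- nonnegative with row and column sums one (double stochasticity)
    (hnonneg : ∀ t i j, 0 ≤ A t i j)
    (hrow : ∀ t i, ∑ j, A t i j = 1)
    (hcol : ∀ t j, ∑ i, A t i j = 1)
    -- positive diagonal and non-vanishing weights
    (hdiag : ∀ t i, 0 < A t i i)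
    (hmin : ∀ t i j, 0 < A t i j → η ≤ A t i j)
    -- undirected graphs
    (hsym : ∀ t i j, 0 < A t i j ↔ 0 < A t j i)
    (x : ℕ → Fin n → ℝ)
    (hdyn : ∀ t, x (t + 1) = (A t).mulVec (x t))
    -- relaxed connectivity: in every block, each cut with unequal sorted values
    -- is crossed by some edge
    (hconn : ∀ t : ℕ, ∃ σ : Equiv.Perm (Fin n),
      (∀ i j : Fin n, i ≤ j → x (t * B) (σ j) ≤ x (t * B) (σ i)) ∧
      ∀ d : ℕ, ∀ hd : d + 1 < n,
        x (t * B) (σ ⟨d + 1, hd⟩) = x (t * B) (σ ⟨d, Nat.lt_of_succ_lt hd⟩) ∨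
        ∃ s, t * B ≤ s ∧ s < (t + 1) * B ∧
          ∃ i j : Fin n, (i : ℕ) ≤ d ∧ d < (j : ℕ) ∧
            (0 < A s (σ i) (σ j) ∨ 0 < A s (σ j) (σ i))) :
    ∀ t : ℕ, 0 < sampleVar (x (t * B)) →
      η / (2 * (n : ℝ) ^ 2) ≤
        (sampleVar (x (t * B)) - sampleVar (x ((t + 1) * B))) /
          sampleVar (x (t * B)) := by
  intro t hV
  classical
  obtain ⟨σ, hsort, hcut⟩ := hconn t
  set t0 := t * B with ht0
  set t1 := (t + 1) * B with ht1
  have ht : t0 ≤ t1 := Nat.mul_le_mul_right B (by omega)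
  set y : ℕ → Fin n → ℝ := fun s i => x s (σ i) with hy
  set M : ℕ → Matrix (Fin n) (Fin n) ℝ := fun s i j => A s (σ i) (σ j) with hM
  have hMnn : ∀ s i j, 0 ≤ M s i j := fun s i j => hnonneg s (σ i) (σ j)
  have hMrow : ∀ s i, ∑ j, M s i j = 1 := by
    intro s i
    calc ∑ j, M s i j = ∑ j, A s (σ i) j := Equiv.sum_comp σ (fun j => A s (σ i) j)
      _ = 1 := hrow s (σ i)
  have hMcol : ∀ s j, ∑ i, M s i j = 1 := by
    intro s j
    calc ∑ i, M s i j = ∑ i, A s i (σ j) := Equiv.sum_comp σ (fun i => A s i (σ j))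
      _ = 1 := hcol s (σ j)
  have hMdiag : ∀ s i, 0 < M s i i := fun s i => hdiag s (σ i)
  have hMmin : ∀ s i j, 0 < M s i j → η ≤ M s i j := fun s i j => hmin s (σ i) (σ j)
  have hMsym : ∀ s i j, 0 < M s i j ↔ 0 < M s j i := fun s i j => hsym s (σ i) (σ j)
  have hMdyn : ∀ s i, y (s+1) i = ∑ j, M s i j * y s j := by
    intro s i
    have h1 : y (s+1) i = (A s).mulVec (x s) (σ i) := by
      rw [hy]; simp only; rw [hdyn s]
    rw [h1]
    simp only [Matrix.mulVec, dotProduct]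
    exact (Equiv.sum_comp σ (fun j => A s (σ i) j * x s j)).symm
  have hsV : ∀ s, sampleVar (y s) = sampleVar (x s) := by
    intro s
    unfold sampleVar
    have hmean : ∑ j, y s j = ∑ j, x s j := Equiv.sum_comp σ (x s)
    rw [hmean]
    exact Equiv.sum_comp σ (fun i => (x s i - (∑ j, x s j) / n)^2)
  have hsorted : ∀ i j : Fin n, i ≤ j → y t0 j ≤ y t0 i := hsort
  have hconn' : ∀ d : ℕ, ∀ hd : d + 1 < n,
      y t0 ⟨d+1, hd⟩ ≠ y t0 ⟨d, Nat.lt_of_succ_lt hd⟩ →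
      ∃ s, t0 ≤ s ∧ s < t1 ∧ ∃ i j : Fin n, (i:ℕ) ≤ d ∧ d < (j:ℕ) ∧ 0 < M s i j := by
    intro d hd hne
    rcases hcut d hd with heq | ⟨s, hs1, hs2, i, j, hij1, hij2, hor⟩
    · exact absurd heq hne
    · refine ⟨s, hs1, hs2, i, j, hij1, hij2, ?_⟩
      rcases hor with h | h
      · exact h
      · exact (hsym s (σ j) (σ i)).1 h
  have main := block_decrease hn η hη M t0 t1 ht hMnn hMrow hMcol hMdiag hMmin hMsym
    y hMdyn hsorted hconn'
  rw [hsV t0, hsV t1] at main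
  rw [div_le_div_iff₀ (by positivity) hV]
  nlinarith [main]
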